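/- Uniqueness of diagonalizable nonnegative-spectrum matrix roots (kernel of Corollary 3.1): let n and τ be natural numbers with τ ≥ 1, and let A and B be n × n real matrices that are each diagonalizable with nonnegative eigenvalues; that is, A = P * D * P⁻¹ and B = Q * M * Q⁻¹ for some invertible real matrices P, Q and diagonal real matrices D, M all of whose diagonal entries are nonnegative. If A^τ = B^τ, then A = B. (Hence a transition matrix that is diagonalizable with nonnegative eigenvalues is uniquely determined, within that class, by its τ₀-th power.) -/
import Mathlib

open Polynomial Matrix

private lemma myMat_conj_pow {n : ℕ} (P X : Matrix (Fin n) (Fin n) ℝ) (hP : IsUnit P.det) (k : ℕ) :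
    (P * X * P⁻¹) ^ k = P * X ^ k * P⁻¹ := by
  induction k with
  | zero => simp [Matrix.mul_nonsing_inv P hP]
  | succ k ih =>
      rw [pow_succ, ih, pow_succ]
      have : P⁻¹ * (P * X * P⁻¹) = X * P⁻¹ := by
        rw [← Matrix.mul_assoc, ← Matrix.mul_assoc, Matrix.nonsing_inv_mul P hP, Matrix.one_mul]
      rw [Matrix.mul_assoc (P * X ^ k) P⁻¹, this, ← Matrix.mul_assoc, ← Matrix.mul_assoc]

private lemma myMat_aeval_conj {n : ℕ} (P X : Matrix (Fin n) (Fin n) ℝ) (hP : IsUnit P.det)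
    (p : ℝ[X]) : aeval (P * X * P⁻¹) p = P * aeval X p * P⁻¹ := by
  induction p using Polynomial.induction_on' with
  | add f g hf hg =>
      rw [map_add, map_add, hf, hg, Matrix.mul_add, Matrix.add_mul]
  | monomial k a =>
      rw [aeval_monomial, aeval_monomial, myMat_conj_pow P X hP k]
      simp [Matrix.mul_smul, Matrix.smul_mul, Matrix.mul_assoc, algebraMap_smul,
        Algebra.algebraMap_eq_smul_one, smul_mul_assoc, mul_smul_comm]

private lemma myMat_aeval_diagonal {n : ℕ} (d : Fin n → ℝ) (p : ℝ[X]) :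
    aeval (Matrix.diagonal d) p = Matrix.diagonal (fun i => p.eval (d i)) := by
  induction p using Polynomial.induction_on' with
  | add f g hf hg =>
      rw [map_add, hf, hg]
      ext i j
      by_cases h : i = j <;> simp [h, Matrix.diagonal, eval_add]
  | monomial k a =>
      rw [aeval_monomial, Matrix.diagonal_pow]
      simp [Algebra.algebraMap_eq_smul_one, Matrix.smul_eq_diagonal_mul,
        Matrix.diagonal_mul_diagonal, eval_monomial]

/-- Uniqueness of diagonalizable nonnegative-spectrum matrix roots (kernel of
Corollary 3.1): two real matrices that are diagonalizable with nonnegative eigenvalues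
and share the same `τ`-th power (`τ ≥ 1`) must be equal. -/
theorem diagonalizable_nonneg_root_unique (n τ : ℕ) (hτ : 1 ≤ τ)
    (A B P Q : Matrix (Fin n) (Fin n) ℝ) (d m : Fin n → ℝ)
    (hP : IsUnit P.det) (hQ : IsUnit Q.det)
    (hd : ∀ i, 0 ≤ d i) (hm : ∀ i, 0 ≤ m i)
    (hA : A = P * Matrix.diagonal d * P⁻¹) (hB : B = Q * Matrix.diagonal m * Q⁻¹)
    (hpow : A ^ τ = B ^ τ) : A = B := by
  have hτ0 : τ ≠ 0 := by omega
  -- nodes: τ-th powers of the diagonal entries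
  set S : Finset ℝ :=
    (Finset.univ.image fun i => d i ^ τ) ∪ (Finset.univ.image fun i => m i ^ τ) with hS
  set p : ℝ[X] := Lagrange.interpolate S id (fun x => x ^ (τ : ℝ)⁻¹) with hp
  have hinj : Set.InjOn (id : ℝ → ℝ) S := Function.injective_id.injOn
  have heval : ∀ x ∈ S, p.eval x = x ^ (τ : ℝ)⁻¹ := fun x hx =>
    Lagrange.eval_interpolate_at_node _ hinj hx
  have hevald : ∀ i, p.eval (d i ^ τ) = d i := by
    intro i
    have hmem : d i ^ τ ∈ S := by
      simp only [hS, Finset.mem_union, Finset.mem_image, Finset.mem_univ, true_and]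
      exact Or.inl ⟨i, rfl⟩
    rw [heval _ hmem, Real.pow_rpow_inv_natCast (hd i) hτ0]
  have hevalm : ∀ i, p.eval (m i ^ τ) = m i := by
    intro i
    have hmem : m i ^ τ ∈ S := by
      simp only [hS, Finset.mem_union, Finset.mem_image, Finset.mem_univ, true_and]
      exact Or.inr ⟨i, rfl⟩
    rw [heval _ hmem, Real.pow_rpow_inv_natCast (hm i) hτ0]
  have keyA : aeval (A ^ τ) p = A := by
    rw [hA, myMat_conj_pow P _ hP, Matrix.diagonal_pow, myMat_aeval_conj P _ hP, myMat_aeval_diagonal]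
    have : (fun i => p.eval ((d ^ τ) i)) = d := funext fun i => by
      simpa [Pi.pow_apply] using hevald i
    rw [this]
  have keyB : aeval (B ^ τ) p = B := by
    rw [hB, myMat_conj_pow Q _ hQ, Matrix.diagonal_pow, myMat_aeval_conj Q _ hQ, myMat_aeval_diagonal]
    have : (fun i => p.eval ((m ^ τ) i)) = m := funext fun i => by
      simpa [Pi.pow_apply] using hevalm i
    rw [this]
  rw [← keyA, ← keyB, hpow]
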